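/- Let g₂, g₃, c₀, c₁ ∈ ℝ, let n ≥ 1 be a natural number, let A ∈ ℝ[X] be a monic polynomial of degree n, and set C := c₁·X + c₀. If the even-case Lamé symmetry identity (4X³ − g₂X − g₃)·A''' + (18X² − (3/2)g₂)·A'' + 4(3X + C)·A' + 2A·C' = 0 holds in ℝ[X], then c₁ = −n(n+1). -/
import Mathlib


open Polynomial

/-- In the even Lamé case with `C = c₁X + c₀` and `A` monic of degree `n ≥ 1`, the symmetry
identity `(4X³ − g₂X − g₃)A''' + (18X² − (3/2)g₂)A'' + 4(3X + C)A' + 2AC' = 0` forces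
`c₁ = −n(n+1)`. -/
theorem even_lame_leading_coefficient
    (g₂ g₃ c₀ c₁ : ℝ) (n : ℕ) (hn : 1 ≤ n)
    (A : Polynomial ℝ) (hA : A.Monic) (hdeg : A.natDegree = n)
    (h : (4 * X ^ 3 - Polynomial.C g₂ * X - Polynomial.C g₃)
          * derivative (derivative (derivative A))
        + (18 * X ^ 2 - Polynomial.C (3 / 2 * g₂)) * derivative (derivative A)
        + 4 * (3 * X + (Polynomial.C c₁ * X + Polynomial.C c₀)) * derivative A
        + 2 * A * derivative (Polynomial.C c₁ * X + Polynomial.C c₀) = 0) :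
    c₁ = -((n : ℝ) * (n + 1)) := by
  have h' : Polynomial.C (4:ℝ) * (derivative (derivative (derivative A)) * X ^ 3)
      - Polynomial.C g₂ * (derivative (derivative (derivative A)) * X ^ 1)
      - Polynomial.C g₃ * derivative (derivative (derivative A))
      + Polynomial.C (18:ℝ) * (derivative (derivative A) * X ^ 2)
      - Polynomial.C (3/2*g₂) * derivative (derivative A)
      + Polynomial.C (12:ℝ) * (derivative A * X ^ 1)
      + Polynomial.C (4*c₁) * (derivative A * X ^ 1) + Polynomial.C (4*c₀) * derivative A
      + Polynomial.C (2*c₁) * A = 0 := by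
    rw [← h]
    simp only [derivative_add, derivative_mul, derivative_C, derivative_X, map_mul, map_ofNat]
    ring
  have hc := congrArg (fun p => p.coeff n) h'
  simp only [coeff_add, coeff_sub, coeff_C_mul, coeff_zero,
    coeff_mul_X_pow', coeff_derivative] at hc
  have ha0 : A.coeff n = 1 := by rw [← hdeg]; exact hA.coeff_natDegree
  have ha : ∀ k, n < k → A.coeff k = 0 := fun k hk =>
    coeff_eq_zero_of_natDegree_lt (hdeg ▸ hk)
  rcases Nat.lt_or_ge n 3 with h3 | h3
  · interval_cases n
    · norm_num [ha0, ha 2 (by norm_num), ha 3 (by norm_num), ha 4 (by norm_num)] at hc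
      push_cast
      linarith
    · norm_num [ha0, ha 3 (by norm_num), ha 4 (by norm_num), ha 5 (by norm_num)] at hc
      push_cast
      linarith
  · have h1 : 1 ≤ n := hn
    have h2 : 2 ≤ n := by omega
    rw [if_pos h1, if_pos h2, if_pos h3, if_pos h1] at hc
    have e3 : n - 3 + 1 + 1 + 1 = n := by omega
    have e2 : n - 2 + 1 + 1 = n := by omega
    have e1 : n - 1 + 1 = n := by omega
    rw [e3, e2, e1] at hc
    rw [ha0, ha (n+1) (by omega), ha (n+1+1) (by omega),
      ha (n+1+1+1) (by omega)] at hc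
    push_cast [Nat.cast_sub h1, Nat.cast_sub h2, Nat.cast_sub h3] at hc
    have hne : (4 * (n:ℝ) + 2) ≠ 0 := by positivity
    apply mul_left_cancel₀ hne
    linear_combination hc
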